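/- Shifting operators as an instance of superLL: consider the instance of superLL with E = {•,★}, de(•) and de(★) true, co_0(•), co_1(•,•), co_2(•,•,•) and co_1(★,★) true (all other co_k false), dg(•,•,•) and dg(★,★,★) true (all other dg false), and p_n(•) and p_n(★) true for all n. Then (i) this instance satisfies the cut-elimination axioms (ce1)–(ce3), the expansion axiom (ea), and the Girardization axioms (gir1)–(gir5), and (ii) writing !A := !_• A, ?A := ?_• A, ∧A := !_★ A, ∨A := ?_★ A, a sequent is provable in this instance if and only if it is provable in LL with shifting operators. -/

import Mathlib

/-- Linear logic formulas with exponential connectives indexed by signatures in `E`. -/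
inductive Formula (E : Type) : Type
  | var : ℕ → Formula E
  | covar : ℕ → Formula E
  | tens : Formula E → Formula E → Formula E
  | parr : Formula E → Formula E → Formula E
  | one : Formula E
  | bot : Formula E
  | awith : Formula E → Formula E → Formula E
  | aplus : Formula E → Formula E → Formula E
  | top : Formula E
  | zero : Formula E
  | oc : E → Formula E → Formula E
  | wn : E → Formula E → Formula E

namespace Formula

/-- Duality on formulas. -/
def dual {E : Type} : Formula E → Formula E
  | var n => covar n
  | covar n => var n
  | tens A B => parr A.dual B.dual
  | parr A B => tens A.dual B.dual
  | one => bot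
  | bot => one
  | awith A B => aplus A.dual B.dual
  | aplus A B => awith A.dual B.dual
  | top => zero
  | zero => top
  | oc e A => wn e A.dual
  | wn e A => oc e A.dual

end Formula

/-- The sequent calculus superLL(E, de, co, dg, p).  The `Bool` index records whether
the cut rule may be used (`true` = cut allowed, `false` = cut-free proofs only). -/
inductive SuperLL {E : Type} (de : E → Prop) (co : List E → E → Prop)
    (dg : E → E → E → Prop) (p : ℕ → E → Prop) : Bool → List (Formula E) → Prop
  | ax (b) (A : Formula E) : SuperLL de co dg p b [A, A.dual]
  | ex {b Γ Δ} : SuperLL de co dg p b Γ → Γ.Perm Δ → SuperLL de co dg p b Δ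
  | cut {A : Formula E} {Γ Δ : List (Formula E)} : SuperLL de co dg p true (A :: Γ) →
      SuperLL de co dg p true (A.dual :: Δ) → SuperLL de co dg p true (Γ ++ Δ)
  | tens {b} {A B : Formula E} {Γ Δ : List (Formula E)} : SuperLL de co dg p b (A :: Γ) → SuperLL de co dg p b (B :: Δ) →
      SuperLL de co dg p b (A.tens B :: (Γ ++ Δ))
  | parr {b} {A B : Formula E} {Γ : List (Formula E)} : SuperLL de co dg p b (A :: B :: Γ) →
      SuperLL de co dg p b (A.parr B :: Γ)
  | one (b) : SuperLL de co dg p b [Formula.one]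
  | bot {b Γ} : SuperLL de co dg p b Γ → SuperLL de co dg p b (Formula.bot :: Γ)
  | awith {b} {A B : Formula E} {Γ : List (Formula E)} : SuperLL de co dg p b (A :: Γ) → SuperLL de co dg p b (B :: Γ) →
      SuperLL de co dg p b (A.awith B :: Γ)
  | aplus1 {b} {A B : Formula E} {Γ : List (Formula E)} : SuperLL de co dg p b (A :: Γ) →
      SuperLL de co dg p b (A.aplus B :: Γ)
  | aplus2 {b} {A B : Formula E} {Γ : List (Formula E)} : SuperLL de co dg p b (B :: Γ) →
      SuperLL de co dg p b (A.aplus B :: Γ)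
  | top (b) (Γ) : SuperLL de co dg p b (Formula.top :: Γ)
  | der {b e A Γ} : de e → SuperLL de co dg p b (A :: Γ) →
      SuperLL de co dg p b (Formula.wn e A :: Γ)
  | con {b} {l : List E} {e A Γ} : co l e →
      SuperLL de co dg p b (l.map (fun ei => Formula.wn ei A) ++ Γ) →
      SuperLL de co dg p b (Formula.wn e A :: Γ)
  | dig {b e1 e2 e A Γ} : dg e1 e2 e →
      SuperLL de co dg p b (Formula.wn e1 (Formula.wn e2 A) :: Γ) →
      SuperLL de co dg p b (Formula.wn e A :: Γ)
  | prom {b e A} {Δ : List (Formula E)} : p Δ.length e → SuperLL de co dg p b (A :: Δ) →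
      SuperLL de co dg p b (Formula.oc e A :: Δ.map (Formula.wn e))

/-- The two exponential signatures. -/
inductive Sig : Type
  | dot : Sig
  | star : Sig

inductive LLsh : Bool → List (Formula Sig) → Prop
  | ax (b) (A : Formula Sig) : LLsh b [A, A.dual]
  | ex {b Γ Δ} : LLsh b Γ → Γ.Perm Δ → LLsh b Δ
  | cut {A : Formula Sig} {Γ Δ : List (Formula Sig)} :
      LLsh true (A :: Γ) → LLsh true (A.dual :: Δ) → LLsh true (Γ ++ Δ)
  | tens {b} {A B : Formula Sig} {Γ Δ : List (Formula Sig)} :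
      LLsh b (A :: Γ) → LLsh b (B :: Δ) → LLsh b (A.tens B :: (Γ ++ Δ))
  | parr {b} {A B : Formula Sig} {Γ : List (Formula Sig)} :
      LLsh b (A :: B :: Γ) → LLsh b (A.parr B :: Γ)
  | one (b) : LLsh b [Formula.one]
  | bot {b Γ} : LLsh b Γ → LLsh b (Formula.bot :: Γ)
  | awith {b} {A B : Formula Sig} {Γ : List (Formula Sig)} :
      LLsh b (A :: Γ) → LLsh b (B :: Γ) → LLsh b (A.awith B :: Γ)
  | aplus1 {b} {A B : Formula Sig} {Γ : List (Formula Sig)} :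
      LLsh b (A :: Γ) → LLsh b (A.aplus B :: Γ)
  | aplus2 {b} {A B : Formula Sig} {Γ : List (Formula Sig)} :
      LLsh b (B :: Γ) → LLsh b (A.aplus B :: Γ)
  | top (b) (Γ) : LLsh b (Formula.top :: Γ)
  | prom {b} {A : Formula Sig} {Γ : List (Formula Sig)} :
      LLsh b (A :: Γ.map (Formula.wn Sig.dot)) →
      LLsh b (Formula.oc Sig.dot A :: Γ.map (Formula.wn Sig.dot))
  | der {b} {A : Formula Sig} {Γ : List (Formula Sig)} :
      LLsh b (A :: Γ) → LLsh b (Formula.wn Sig.dot A :: Γ)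
  | wk {b} {A : Formula Sig} {Γ : List (Formula Sig)} :
      LLsh b Γ → LLsh b (Formula.wn Sig.dot A :: Γ)
  | ctr {b} {A : Formula Sig} {Γ : List (Formula Sig)} :
      LLsh b (Formula.wn Sig.dot A :: Formula.wn Sig.dot A :: Γ) →
      LLsh b (Formula.wn Sig.dot A :: Γ)
  | shpos {b} {A : Formula Sig} {Γ : List (Formula Sig)} :
      LLsh b (A :: Γ.map (Formula.wn Sig.star)) →
      LLsh b (Formula.oc Sig.star A :: Γ.map (Formula.wn Sig.star))
  | shneg {b} {A : Formula Sig} {Γ : List (Formula Sig)} :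
      LLsh b (A :: Γ) → LLsh b (Formula.wn Sig.star A :: Γ)

/-- The shifting-operators instance of superLL: `E = {•,★}`, `de` full, `co_0(•)`,
`co_1(•,•)`, `co_2(•,•,•)`, `co_1(★,★)` true (other `co_k` false), `dg(•,•,•)` and
`dg(★,★,★)` true (other `dg` false), `p_n` full. -/
def deSh : Sig → Prop := fun _ => True
def coSh : List Sig → Sig → Prop := fun l e =>
  (l = [] ∧ e = Sig.dot) ∨ (l = [Sig.dot] ∧ e = Sig.dot) ∨
  (l = [Sig.dot, Sig.dot] ∧ e = Sig.dot) ∨ (l = [Sig.star] ∧ e = Sig.star)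
def dgSh : Sig → Sig → Sig → Prop := fun e1 e2 e =>
  (e1 = Sig.dot ∧ e2 = Sig.dot ∧ e = Sig.dot) ∨
  (e1 = Sig.star ∧ e2 = Sig.star ∧ e = Sig.star)
def pSh : ℕ → Sig → Prop := fun _ _ => True


theorem Formula.dual_dual {E : Type} (A : Formula E) : A.dual.dual = A := by
  induction A <;> simp [Formula.dual, *]

/-- Apply a unary rule (like dereliction) pointwise to a sublist of the context. -/
theorem LLsh_map_list {f : Formula Sig → Formula Sig}
    (h : ∀ {b : Bool} {A : Formula Sig} {Γ : List (Formula Sig)},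
      LLsh b (A :: Γ) → LLsh b (f A :: Γ)) :
    ∀ {b : Bool} (Γ Θ : List (Formula Sig)), LLsh b (Θ ++ Γ) → LLsh b (Θ ++ Γ.map f) := by
  intro b Γ
  induction Γ with
  | nil => intro Θ h'; simpa using h'
  | cons A Γ ih =>
    intro Θ h'
    have h1 : LLsh b (A :: (Θ ++ Γ)) := h'.ex List.perm_middle
    have h2 : LLsh b ((Θ ++ [f A]) ++ Γ) :=
      (h h1).ex (by rw [List.append_assoc]; exact List.perm_middle.symm)
    have h3 := ih (Θ ++ [f A]) h2
    exact h3.ex (by rw [List.append_assoc]; exact List.Perm.refl _)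

/-- Apply digging pointwise to a sublist of the context in superLL. -/
theorem SuperLL_dig_list {e : Sig} (hd : dgSh e e e) :
    ∀ {b : Bool} (Γ Θ : List (Formula Sig)),
      SuperLL deSh coSh dgSh pSh b (Θ ++ Γ.map (fun A => Formula.wn e (Formula.wn e A))) →
      SuperLL deSh coSh dgSh pSh b (Θ ++ Γ.map (Formula.wn e)) := by
  intro b Γ
  induction Γ with
  | nil => intro Θ h'; simpa using h'
  | cons A Γ ih =>
    intro Θ h'
    have h1 : SuperLL deSh coSh dgSh pSh b
        (Formula.wn e (Formula.wn e A) :: (Θ ++ Γ.map (fun A => Formula.wn e (Formula.wn e A)))) :=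
      h'.ex List.perm_middle
    have h2 := SuperLL.dig hd h1
    have h3 : SuperLL deSh coSh dgSh pSh b
        ((Θ ++ [Formula.wn e A]) ++ Γ.map (fun A => Formula.wn e (Formula.wn e A))) :=
      h2.ex (by rw [List.append_assoc]; exact List.perm_middle.symm)
    have h4 := ih (Θ ++ [Formula.wn e A]) h3
    exact h4.ex (by rw [List.append_assoc]; exact List.Perm.refl _)

/-- ⊢ !!B, ?B⊥ in LLsh. -/
theorem LLsh_dig_dot (B : Formula Sig) :
    LLsh true [Formula.oc Sig.dot (Formula.oc Sig.dot B), Formula.wn Sig.dot B.dual] := by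
  have h1 : LLsh true [B.dual, B.dual.dual] := LLsh.ax true B.dual
  rw [Formula.dual_dual] at h1
  have h2 : LLsh true [B, B.dual] := h1.ex (List.Perm.swap _ _ _)
  have h3 : LLsh true [B, Formula.wn Sig.dot B.dual] :=
    ((LLsh.der (h2.ex (List.Perm.swap _ _ _)))).ex (List.Perm.swap _ _ _)
  have h4 : LLsh true (Formula.oc Sig.dot B :: ([B.dual].map (Formula.wn Sig.dot))) :=
    LLsh.prom (by simpa using h3)
  have h5 : LLsh true (Formula.oc Sig.dot (Formula.oc Sig.dot B) ::
      ([B.dual].map (Formula.wn Sig.dot))) := LLsh.prom (by simpa using h4)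
  simpa using h5

/-- ⊢ ∧∧B, ∨B⊥ in LLsh. -/
theorem LLsh_dig_star (B : Formula Sig) :
    LLsh true [Formula.oc Sig.star (Formula.oc Sig.star B), Formula.wn Sig.star B.dual] := by
  have h1 : LLsh true [B.dual, B.dual.dual] := LLsh.ax true B.dual
  rw [Formula.dual_dual] at h1
  have h2 : LLsh true [B, B.dual] := h1.ex (List.Perm.swap _ _ _)
  have h3 : LLsh true [B, Formula.wn Sig.star B.dual] :=
    ((LLsh.shneg (h2.ex (List.Perm.swap _ _ _)))).ex (List.Perm.swap _ _ _)
  have h4 : LLsh true (Formula.oc Sig.star B :: ([B.dual].map (Formula.wn Sig.star))) :=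
    LLsh.shpos (by simpa using h3)
  have h5 : LLsh true (Formula.oc Sig.star (Formula.oc Sig.star B) ::
      ([B.dual].map (Formula.wn Sig.star))) := LLsh.shpos (by simpa using h4)
  simpa using h5

theorem superLL_to_LLsh : ∀ {b : Bool} {Γ : List (Formula Sig)},
    SuperLL deSh coSh dgSh pSh b Γ → LLsh true Γ := by
  intro b Γ h
  induction h with
  | ax b A => exact LLsh.ax _ _
  | ex _ hp ih => exact ih.ex hp
  | cut _ _ ih1 ih2 => exact LLsh.cut ih1 ih2
  | tens _ _ ih1 ih2 => exact LLsh.tens ih1 ih2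
  | parr _ ih => exact LLsh.parr ih
  | one b => exact LLsh.one _
  | bot _ ih => exact LLsh.bot ih
  | awith _ _ ih1 ih2 => exact LLsh.awith ih1 ih2
  | aplus1 _ ih => exact LLsh.aplus1 ih
  | aplus2 _ ih => exact LLsh.aplus2 ih
  | top b Γ => exact LLsh.top _ _
  | @der b e A Γ hde _ ih =>
    cases e with
    | dot => exact LLsh.der ih
    | star => exact LLsh.shneg ih
  | @con b l e A Γ hco _ ih =>
    rcases hco with ⟨hl, he⟩ | ⟨hl, he⟩ | ⟨hl, he⟩ | ⟨hl, he⟩ <;> subst hl <;> subst he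
    · exact LLsh.wk ih
    · exact ih
    · exact LLsh.ctr ih
    · exact ih
  | @dig b e1 e2 e A Γ hdg _ ih =>
    rcases hdg with ⟨h1, h2, h3⟩ | ⟨h1, h2, h3⟩ <;> subst h1 <;> subst h2 <;> subst h3
    · have hd : LLsh true ((Formula.wn Sig.dot (Formula.wn Sig.dot A)).dual :: [Formula.wn Sig.dot A]) := by
        simpa [Formula.dual, Formula.dual_dual] using LLsh_dig_dot A.dual
      exact (LLsh.cut ih hd).ex (List.perm_append_singleton _ _)
    · have hd : LLsh true ((Formula.wn Sig.star (Formula.wn Sig.star A)).dual :: [Formula.wn Sig.star A]) := by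
        simpa [Formula.dual, Formula.dual_dual] using LLsh_dig_star A.dual
      exact (LLsh.cut ih hd).ex (List.perm_append_singleton _ _)
  | @prom b e A Δ hp _ ih =>
    cases e with
    | dot =>
      have h1 : LLsh true ([A] ++ Δ.map (Formula.wn Sig.dot)) :=
        LLsh_map_list (fun h => LLsh.der h) Δ [A] ih
      exact LLsh.prom (by simpa using h1)
    | star =>
      have h1 : LLsh true ([A] ++ Δ.map (Formula.wn Sig.star)) :=
        LLsh_map_list (fun h => LLsh.shneg h) Δ [A] ih
      exact LLsh.shpos (by simpa using h1)

theorem LLsh_to_superLL : ∀ {b : Bool} {Γ : List (Formula Sig)},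
    LLsh b Γ → SuperLL deSh coSh dgSh pSh b Γ := by
  intro b Γ h
  induction h with
  | ax b A => exact SuperLL.ax _ _
  | ex _ hp ih => exact ih.ex hp
  | cut _ _ ih1 ih2 => exact SuperLL.cut ih1 ih2
  | tens _ _ ih1 ih2 => exact SuperLL.tens ih1 ih2
  | parr _ ih => exact SuperLL.parr ih
  | one b => exact SuperLL.one _
  | bot _ ih => exact SuperLL.bot ih
  | awith _ _ ih1 ih2 => exact SuperLL.awith ih1 ih2
  | aplus1 _ ih => exact SuperLL.aplus1 ih
  | aplus2 _ ih => exact SuperLL.aplus2 ih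
  | top b Γ => exact SuperLL.top _ _
  | @prom b A Γ _ ih =>
    have h1 := SuperLL.prom (e := Sig.dot) trivial ih
    have h2 : SuperLL deSh coSh dgSh pSh b ([Formula.oc Sig.dot A] ++
        Γ.map (fun B => Formula.wn Sig.dot (Formula.wn Sig.dot B))) := by
      simpa [List.map_map, Function.comp_def] using h1
    have h3 := SuperLL_dig_list (Or.inl ⟨rfl, rfl, rfl⟩) Γ [Formula.oc Sig.dot A] h2
    simpa using h3
  | der _ ih => exact SuperLL.der trivial ih
  | wk _ ih => exact SuperLL.con (l := []) (Or.inl ⟨rfl, rfl⟩) ih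
  | ctr _ ih =>
    exact SuperLL.con (l := [Sig.dot, Sig.dot]) (Or.inr (Or.inr (Or.inl ⟨rfl, rfl⟩))) ih
  | @shpos b A Γ _ ih =>
    have h1 := SuperLL.prom (e := Sig.star) trivial ih
    have h2 : SuperLL deSh coSh dgSh pSh b ([Formula.oc Sig.star A] ++
        Γ.map (fun B => Formula.wn Sig.star (Formula.wn Sig.star B))) := by
      simpa [List.map_map, Function.comp_def] using h1
    have h3 := SuperLL_dig_list (Or.inr ⟨rfl, rfl, rfl⟩) Γ [Formula.oc Sig.star A] h2
    simpa using h3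
  | shneg _ ih => exact SuperLL.der trivial ih

/-- Shifting operators as an instance of superLL: the instance satisfies the
cut-elimination axioms, the expansion axiom and the Girardization axioms, and
provability in the instance coincides with provability in LL with shifting
operators. -/
theorem superLL_shift_instance :
    ((∀ (m n : ℕ) (e : Sig), 0 < m → pSh m e → pSh n e → pSh (m + n - 1) e) ∧
    (∀ (l : List Sig) (e : Sig), coSh l e → ∀ n : ℕ, pSh n e → ∀ ei ∈ l, pSh n ei) ∧
    (∀ e1 e2 e : Sig, dgSh e1 e2 e → ∀ n : ℕ, pSh n e → pSh n e1 ∧ pSh n e2)) ∧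
    (∀ e : Sig, pSh 1 e) ∧
    ((∀ e1 e2 e : Sig, dgSh e1 e2 e → pSh 1 e1) ∧
    (∀ e1 e2 e : Sig, deSh e1 → dgSh e1 e2 e → coSh [e2] e) ∧
    (∀ (l : List Sig) (e1 e2 e : Sig), coSh l e1 → dgSh e1 e2 e →
      ∃ l' : List Sig, List.Forall₂ (fun εi ε'i => dgSh εi e2 ε'i) l l' ∧ coSh l' e) ∧
    (∀ e1 e2 e3 e' e : Sig, dgSh e1 e2 e' → dgSh e' e3 e →
      ∃ e'' : Sig, dgSh e2 e3 e'' ∧ dgSh e1 e'' e) ∧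
    (∀ (n : ℕ) (e : Sig), 0 < n → pSh n e → ∃ e' : Sig, deSh e' ∧ dgSh e e' e)) ∧
    (∀ Γ : List (Formula Sig), SuperLL deSh coSh dgSh pSh true Γ ↔ LLsh true Γ) := by
  refine ⟨⟨by intros; trivial, by intros; trivial, fun _ _ _ _ _ _ => ⟨trivial, trivial⟩⟩,
    fun _ => trivial,
    ⟨by intros; trivial, ?_, ?_, ?_, ?_⟩,
    fun Γ => ⟨superLL_to_LLsh, LLsh_to_superLL⟩⟩
  · -- gir2
    rintro e1 e2 e _ (⟨rfl, rfl, rfl⟩ | ⟨rfl, rfl, rfl⟩)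
    · exact Or.inr (Or.inl ⟨rfl, rfl⟩)
    · exact Or.inr (Or.inr (Or.inr ⟨rfl, rfl⟩))
  · -- gir3
    rintro l e1 e2 e hco (⟨rfl, rfl, rfl⟩ | ⟨rfl, rfl, rfl⟩)
    · rcases hco with ⟨rfl, _⟩ | ⟨rfl, _⟩ | ⟨rfl, _⟩ | ⟨rfl, h⟩
      · exact ⟨[], List.Forall₂.nil, Or.inl ⟨rfl, rfl⟩⟩
      · exact ⟨[Sig.dot], List.Forall₂.cons (Or.inl ⟨rfl, rfl, rfl⟩) List.Forall₂.nil,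
          Or.inr (Or.inl ⟨rfl, rfl⟩)⟩
      · exact ⟨[Sig.dot, Sig.dot], List.Forall₂.cons (Or.inl ⟨rfl, rfl, rfl⟩)
          (List.Forall₂.cons (Or.inl ⟨rfl, rfl, rfl⟩) List.Forall₂.nil),
          Or.inr (Or.inr (Or.inl ⟨rfl, rfl⟩))⟩
      · cases h
    · rcases hco with ⟨rfl, h⟩ | ⟨rfl, h⟩ | ⟨rfl, h⟩ | ⟨rfl, _⟩
      · cases h
      · cases h
      · cases h
      · exact ⟨[Sig.star], List.Forall₂.cons (Or.inr ⟨rfl, rfl, rfl⟩) List.Forall₂.nil,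
          Or.inr (Or.inr (Or.inr ⟨rfl, rfl⟩))⟩
  · -- gir4
    rintro e1 e2 e3 e' e (⟨rfl, rfl, rfl⟩ | ⟨rfl, rfl, rfl⟩) (⟨h, rfl, rfl⟩ | ⟨h, rfl, rfl⟩)
    · exact ⟨Sig.dot, Or.inl ⟨rfl, rfl, rfl⟩, Or.inl ⟨rfl, rfl, rfl⟩⟩
    · cases h
    · cases h
    · exact ⟨Sig.star, Or.inr ⟨rfl, rfl, rfl⟩, Or.inr ⟨rfl, rfl, rfl⟩⟩
  · -- gir5
    rintro n e _ _
    cases e with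
    | dot => exact ⟨Sig.dot, trivial, Or.inl ⟨rfl, rfl, rfl⟩⟩
    | star => exact ⟨Sig.star, trivial, Or.inr ⟨rfl, rfl, rfl⟩⟩
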